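/- arXiv:2210.16940 — 4 statements merged into one kernel-verified Lean document; each statement's English description precedes it below -/
import Mathlib

section
/- Let n ≥ 2, fix a label y ∈ {1,…,n}, and let T be a positive even integer with T mod n ≠ 1. For any η in the simplex satisfying η_y = max_{i≠y} η_i (i.e., η is on the decision boundary for class y), there exists an integer vector s ∈ ℤⁿ with s_i ≥ 0, ∑ s_i = T, and s_y = max_{i≠y} s_i, such that |η_i − s_i/T| ≤ 1/T for all i. -/
/-- `η y` equals the maximum of the coordinates `η i` over `i ≠ y`. -/
def IsRunnerUpMax {n : ℕ} (y : Fin n) (η : Fin n → ℝ) : Prop :=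
  (∀ i, i ≠ y → η i ≤ η y) ∧ ∃ j, j ≠ y ∧ η j = η y

theorem decision_boundary_grid_covering (n : ℕ) (hn : 2 ≤ n) (y : Fin n)
    (T : ℕ) (hT : 0 < T) (hTeven : T % 2 = 0) (hTn : T % n ≠ 1)
    (η : Fin n → ℝ) (hpos : ∀ i, 0 ≤ η i) (hsum : ∑ i, η i = 1)
    (hbdry : IsRunnerUpMax y η) :
    ∃ s : Fin n → ℤ, (∀ i, 0 ≤ s i) ∧ (∑ i, s i = (T : ℤ)) ∧
      IsRunnerUpMax y (fun i => (s i : ℝ)) ∧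
      ∀ i, |η i - (s i : ℝ) / (T : ℝ)| ≤ 1 / (T : ℝ) := by
  obtain ⟨hle, j, hjy, hjη⟩ := hbdry
  have hTpos : (0:ℝ) < T := by exact_mod_cast hT
  set f : Fin n → ℤ := fun i => ⌊(T:ℝ) * η i⌋ with hf
  have hf_nonneg : ∀ i, 0 ≤ f i := fun i =>
    Int.floor_nonneg.2 (mul_nonneg (le_of_lt hTpos) (hpos i))
  have hf_le : ∀ i, (f i : ℝ) ≤ T * η i := fun i => Int.floor_le _
  have hf_gt : ∀ i, (T:ℝ) * η i < f i + 1 := fun i => Int.lt_floor_add_one _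
  have hsumT : ∑ i, (T:ℝ) * η i = T := by
    rw [← Finset.mul_sum, hsum, mul_one]
  have hFle : (∑ i, f i) ≤ (T:ℤ) := by
    have : ((∑ i, f i : ℤ) : ℝ) ≤ T := by
      push_cast
      rw [← hsumT]
      exact Finset.sum_le_sum fun i _ => hf_le i
    exact_mod_cast this
  have hFgt : (T:ℤ) < ∑ i, f i + n := by
    have : (T:ℝ) < ((∑ i, f i : ℤ) : ℝ) + n := by
      rw [← hsumT]
      have h1 : ∑ i, (T:ℝ) * η i < ∑ i, ((f i : ℝ) + 1) := by
        haveI : Nonempty (Fin n) := ⟨y⟩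
        apply Finset.sum_lt_sum_of_nonempty
        · exact Finset.univ_nonempty
        · exact fun i _ => hf_gt i
      have h2 : ∑ i, ((f i : ℝ) + 1) = ((∑ i, f i : ℤ) : ℝ) + n := by
        rw [Finset.sum_add_distrib]
        push_cast
        simp [Finset.card_univ]
      linarith [h1, h2.symm.le]
    exact_mod_cast this
  set D : ℤ := (T:ℤ) - ∑ i, f i with hD
  have hD0 : 0 ≤ D := by omega
  have hDlt : D < n := by omega
  have hfj : f j = f y := by simp only [hf, hjη]
  have hmax : ∀ i, f i ≤ f y := by
    intro i
    by_cases h : i = y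
    · simp [h]
    · exact Int.floor_le_floor (mul_le_mul_of_nonneg_left (hle i h) (le_of_lt hTpos))
  -- generic construction: bump coordinates in C by one
  have key : ∀ C : Finset (Fin n), ((C.card : ℤ) = D) → (j ∈ C ↔ y ∈ C) →
      (∀ i, i ≠ y → i ∈ C → (y ∈ C ∨ f i < f y)) →
      ∃ s : Fin n → ℤ, (∀ i, 0 ≤ s i) ∧ (∑ i, s i = (T : ℤ)) ∧
      IsRunnerUpMax y (fun i => (s i : ℝ)) ∧
      ∀ i, |η i - (s i : ℝ) / (T : ℝ)| ≤ 1 / (T : ℝ) := by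
    intro C hcard hjyC hcond
    refine ⟨fun i => f i + (if i ∈ C then 1 else 0), ?_, ?_, ?_, ?_⟩
    · intro i
      have := hf_nonneg i
      by_cases h : i ∈ C <;> simp [h] <;> omega
    · rw [Finset.sum_add_distrib]
      have : ∑ i, (if i ∈ C then (1:ℤ) else 0) = C.card := by
        rw [Finset.sum_ite_mem, Finset.univ_inter, Finset.sum_const]
        simp
      rw [this, hcard]
      omega
    · constructor
      · intro i hiy
        have hfi := hmax i
        have : f i + (if i ∈ C then (1:ℤ) else 0) ≤ f y + (if y ∈ C then 1 else 0) := by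
          by_cases h : i ∈ C
          · rcases hcond i hiy h with hy | hlt
            · simp [h, hy]; omega
            · by_cases hy : y ∈ C <;> simp [h, hy] <;> omega
          · by_cases hy : y ∈ C <;> simp [h, hy] <;> omega
        show ((f i + (if i ∈ C then (1:ℤ) else 0) : ℤ) : ℝ) ≤
          ((f y + (if y ∈ C then (1:ℤ) else 0) : ℤ) : ℝ)
        exact_mod_cast this
      · refine ⟨j, hjy, ?_⟩
        have : f j + (if j ∈ C then (1:ℤ) else 0) = f y + (if y ∈ C then 1 else 0) := by
          by_cases h : y ∈ C
          · simp [h, hjyC.2 h, hfj]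
          · have : j ∉ C := fun hj => h (hjyC.1 hj)
            simp [h, this, hfj]
        show ((f j + (if j ∈ C then (1:ℤ) else 0) : ℤ) : ℝ) =
          ((f y + (if y ∈ C then (1:ℤ) else 0) : ℤ) : ℝ)
        exact_mod_cast this
    · intro i
      set si : ℤ := f i + (if i ∈ C then 1 else 0) with hsi
      have hb1 : (f i : ℝ) ≤ (si : ℝ) := by
        have : f i ≤ si := by by_cases h : i ∈ C <;> simp [hsi, h]
        exact_mod_cast this
      have hb2 : (si : ℝ) ≤ (f i : ℝ) + 1 := by
        have : si ≤ f i + 1 := by by_cases h : i ∈ C <;> simp [hsi, h]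
        exact_mod_cast this
      have habs : |(T:ℝ) * η i - si| ≤ 1 := by
        have h1 := hf_le i
        have h2 := hf_gt i
        rw [abs_le]
        constructor <;> linarith
      have heq : η i - (si : ℝ) / T = ((T:ℝ) * η i - si) / T := by
        rw [sub_div]
        rw [mul_comm, mul_div_assoc, div_self hTpos.ne', mul_one]
      rw [heq, abs_div, abs_of_pos hTpos]
      gcongr
  -- now choose C according to D
  rcases lt_or_ge D 2 with hD2 | hD2
  · rcases (by omega : D = 0 ∨ D = 1) with h0 | h1
    · exact key ∅ (by simp [h0]) (by simp) (by simp)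
    · -- D = 1 : find i0 ∉ {y, j} with f i0 < f y
      have hfy0 : 0 ≤ f y := hf_nonneg y
      by_cases hall : ∀ i, i ≠ y → i ≠ j → f i = f y
      · exfalso
        have hsumf : ∑ i, f i = n * f y := by
          have : ∀ i ∈ Finset.univ, f i = f y := by
            intro i _
            by_cases h1' : i = y
            · rw [h1']
            · by_cases h2 : i = j
              · rw [h2, hfj]
              · exact hall i h1' h2
          rw [Finset.sum_congr rfl this, Finset.sum_const, Finset.card_univ,
            Fintype.card_fin, nsmul_eq_mul]
        have hTeq : (T:ℤ) = n * f y + 1 := by omega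
        apply hTn
        have h1n : (1:ℤ) < n := by exact_mod_cast hn
        have hmod : (T:ℤ) % n = 1 := by
          rw [hTeq, add_comm, Int.add_mul_emod_self_left]
          exact Int.emod_eq_of_lt (by norm_num) h1n
        omega
      · push_neg at hall
        obtain ⟨i0, hi0y, hi0j, hi0⟩ := hall
        have hlt : f i0 < f y := lt_of_le_of_ne (hmax i0) hi0
        refine key {i0} (by simp [h1]) ?_ ?_
        · simp only [Finset.mem_singleton]
          constructor
          · intro h; exact absurd h.symm hi0j
          · intro h; exact absurd h.symm hi0y
        · intro i hiy hiC
          right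
          have : i = i0 := by simpa using hiC
          rw [this]; exact hlt
  · -- D ≥ 2 : bump y, j, and D - 2 more coordinates
    obtain ⟨k, hk⟩ := Int.eq_ofNat_of_zero_le (by omega : (0:ℤ) ≤ D - 2)
    have hcard2 : ({y, j} : Finset (Fin n)).card = 2 := by
      rw [Finset.card_insert_of_notMem (by simp [Ne.symm hjy]), Finset.card_singleton]
    have hcardsd : (Finset.univ \ ({y, j} : Finset (Fin n))).card = n - 2 := by
      rw [Finset.card_sdiff_of_subset (Finset.subset_univ _), Finset.card_univ, Fintype.card_fin, hcard2]
    have hkle : k ≤ n - 2 := by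
      have h2n : (2:ℤ) ≤ n := by exact_mod_cast hn
      have : (k:ℤ) ≤ (n:ℤ) - 2 := by omega
      omega
    obtain ⟨B, hBsub, hBcard⟩ := Finset.exists_subset_card_eq
      (s := Finset.univ \ ({y, j} : Finset (Fin n))) (n := k) (by rw [hcardsd]; exact hkle)
    have hyB : y ∉ B := fun h => by simpa using (hBsub h)
    have hjB : j ∉ B := fun h => by simpa using (hBsub h)
    refine key (B ∪ {y, j}) ?_ (by simp) (fun i _ _ => Or.inl (by simp))
    have hdisj : Disjoint B ({y, j} : Finset (Fin n)) := by
      rw [Finset.disjoint_left]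
      intro a haB ha
      rcases Finset.mem_insert.1 ha with h | h
      · exact hyB (h ▸ haB)
      · exact hjB ((Finset.mem_singleton.1 h) ▸ haB)
    rw [Finset.card_union_of_disjoint hdisj, hBcard, hcard2]
    push_cast
    omega
end

section
/- Let κ > 0, V̲ > 0, and suppose the disturbance magnitude satisfies ε̄ ≤ κ·V̲/(L_V·L). If ⟨∇V(η), f(η, x)⟩ ≤ −κ V(η) on the level set {η : V(η) = V̲}, ‖∇V‖₂ ≤ L_V, and f is L-Lipschitz in x, then for any perturbation ‖ε‖₂ ≤ ε̄ and any η with V(η) = V̲, ⟨∇V(η), f(η, x + ε)⟩ ≤ 0. -/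
open RealInnerProductSpace in
theorem sufficient_exponential_stability (k n : ℕ)
    (V : EuclideanSpace ℝ (Fin k) → ℝ)
    (gradV : EuclideanSpace ℝ (Fin k) → EuclideanSpace ℝ (Fin k))
    (f : EuclideanSpace ℝ (Fin k) → EuclideanSpace ℝ (Fin n) → EuclideanSpace ℝ (Fin k))
    (κ Vlow L LV εbar : ℝ)
    (hκ : 0 < κ) (hVlow : 0 < Vlow) (hL : 0 ≤ L) (hLV : 0 ≤ LV) (hεpos : 0 ≤ εbar)
    (hε : εbar ≤ κ * Vlow / (LV * L))
    (hgrad : ∀ η, HasGradientAt V (gradV η) η)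
    (hlyap : ∀ η, V η = Vlow → ∀ x, ⟪gradV η, f η x⟫ ≤ -κ * V η)
    (hlip : ∀ η, LipschitzWith (Real.toNNReal L) (f η))
    (hgradbound : ∀ η, ‖gradV η‖ ≤ LV) :
    ∀ η, V η = Vlow → ∀ x ε : EuclideanSpace ℝ (Fin n), ‖ε‖ ≤ εbar →
      ⟪gradV η, f η (x + ε)⟫ ≤ 0 := by
  intro η hη x ε hεb
  have hlyap' := hlyap η hη x
  rw [hη] at hlyap'
  have hdist : ‖f η (x + ε) - f η x‖ ≤ L * εbar := by
    have := (hlip η).dist_le_mul (x + ε) x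
    simp only [dist_eq_norm, add_sub_cancel_left] at this
    calc ‖f η (x + ε) - f η x‖ ≤ (Real.toNNReal L : ℝ) * ‖ε‖ := this
      _ ≤ L * εbar := by
          rw [Real.coe_toNNReal L hL]
          exact mul_le_mul_of_nonneg_left hεb hL
  have key : ⟪gradV η, f η (x + ε) - f η x⟫ ≤ LV * (L * εbar) := by
    calc ⟪gradV η, f η (x + ε) - f η x⟫ ≤ ‖gradV η‖ * ‖f η (x + ε) - f η x‖ :=
          real_inner_le_norm _ _
      _ ≤ LV * (L * εbar) := by
          apply mul_le_mul (hgradbound η) hdist (norm_nonneg _)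
          exact hLV
  have hprod : LV * (L * εbar) ≤ κ * Vlow := by
    rcases eq_or_lt_of_le (mul_nonneg hLV hL) with h0 | hpos
    · rw [← mul_assoc, ← h0, zero_mul]
      positivity
    · rw [← mul_assoc]
      calc LV * L * εbar ≤ LV * L * (κ * Vlow / (LV * L)) :=
            mul_le_mul_of_nonneg_left hε (le_of_lt hpos)
        _ = κ * Vlow := by field_simp; exact div_self hpos.ne'
  have : ⟪gradV η, f η (x + ε)⟫ = ⟪gradV η, f η x⟫ + ⟪gradV η, f η (x + ε) - f η x⟫ := by
    rw [← inner_add_right, add_sub_cancel]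
  rw [this]
  linarith
end

section
/- Let P(l, u, f̂) be the solution of min_f ½‖f − f̂‖₂² subject to 1ᵀf = b and l ≤ f ≤ u, assuming feasibility. Fix a coordinate i. Then P(l, u, f̂)_i is non-decreasing in f̂_i, non-increasing in f̂_j for j ≠ i, non-decreasing in l_i and u_i, and non-increasing in l_j and u_j for j ≠ i. Consequently, if l̲ ≤ l ≤ l̄, ū̲ ≤ u ≤ ū, and f̲ ≤ f̂ ≤ f̄ componentwise, then P(l, u, f̂)_i is bounded below by P evaluated with the i-th bounds at their lower values and all other coordinates' bounds at their upper values, and bounded above symmetrically. -/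
/-- Feasibility for the CBF-QP: sum constraint and box constraints. -/
def QPFeasible {n : ℕ} (b : ℝ) (l u g : Fin n → ℝ) : Prop :=
  (∑ i, g i = b) ∧ ∀ i, l i ≤ g i ∧ g i ≤ u i

/-- The problem data `(l, u)` is feasible. -/
def QPDataFeasible {n : ℕ} (b : ℝ) (l u : Fin n → ℝ) : Prop :=
  (∀ i, l i ≤ u i) ∧ ∑ i, l i ≤ b ∧ b ≤ ∑ i, u i

/-- `mix i a c` takes the `i`-th coordinate from `a` and all others from `c`. -/
def mix {n : ℕ} (i : Fin n) (a c : Fin n → ℝ) : Fin n → ℝ :=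
  fun j => if j = i then a j else c j


lemma qp_exchange {n : ℕ} {b : ℝ} {l u a f : Fin n → ℝ}
    (hf : QPFeasible b l u f)
    (hopt : ∀ g, QPFeasible b l u g →
      (1 / 2) * ∑ k, (f k - a k) ^ 2 ≤ (1 / 2) * ∑ k, (g k - a k) ^ 2)
    {p q : Fin n} (hpq : p ≠ q) (hp : f p < u p) (hq : l q < f q) :
    a p - f p ≤ a q - f q := by
  by_contra hcon
  push_neg at hcon
  set D : ℝ := (a p - f p) - (a q - f q) with hD
  have hDpos : 0 < D := by simp only [hD]; linarith
  set ε : ℝ := min (min (u p - f p) (f q - l q)) (D / 2) with hε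
  have hεpos : 0 < ε :=
    lt_min (lt_min (by linarith) (by linarith)) (by linarith)
  have hεp : ε ≤ u p - f p := le_trans (min_le_left _ _) (min_le_left _ _)
  have hεq : ε ≤ f q - l q := le_trans (min_le_left _ _) (min_le_right _ _)
  have hεD : ε ≤ D / 2 := min_le_right _ _
  set g : Fin n → ℝ := fun k => if k = p then f p + ε else if k = q then f q - ε else f k with hg
  have hgp : g p = f p + ε := by simp [hg]
  have hgq : g q = f q - ε := by simp [hg, Ne.symm hpq]
  have hgo : ∀ k, k ≠ p → k ≠ q → g k = f k := by
    intro k h1 h2; simp [hg, h1, h2]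
  have hgval : ∀ k, g k = f k + (if k = p then ε else 0) - (if k = q then ε else 0) := by
    intro k
    by_cases h1 : k = p
    · subst h1; rw [hgp, if_pos rfl, if_neg hpq]; ring
    · by_cases h2 : k = q
      · subst h2; rw [hgq, if_neg h1, if_pos rfl]; ring
      · rw [hgo k h1 h2, if_neg h1, if_neg h2]; ring
  have hgfeas : QPFeasible b l u g := by
    constructor
    · rw [Finset.sum_congr rfl (fun k _ => hgval k)]
      rw [Finset.sum_sub_distrib, Finset.sum_add_distrib]
      simp [hf.1]
    · intro k
      rcases hf.2 k with ⟨h1, h2⟩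
      by_cases hk1 : k = p
      · subst hk1; rw [hgp]
        exact ⟨by linarith, by linarith⟩
      · by_cases hk2 : k = q
        · subst hk2; rw [hgq]
          exact ⟨by linarith, by linarith⟩
        · rw [hgo k hk1 hk2]; exact ⟨h1, h2⟩
  have hkey : ∀ k, (g k - a k) ^ 2 = (f k - a k) ^ 2
      + (if k = p then 2 * ε * (f p - a p) + ε ^ 2 else 0)
      + (if k = q then -(2 * ε * (f q - a q)) + ε ^ 2 else 0) := by
    intro k
    by_cases h1 : k = p
    · subst h1; rw [hgp, if_pos rfl, if_neg hpq]; ring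
    · by_cases h2 : k = q
      · subst h2; rw [hgq, if_neg h1, if_pos rfl]; ring
      · rw [hgo k h1 h2, if_neg h1, if_neg h2]; ring
  have hsum : ∑ k, (g k - a k) ^ 2 = (∑ k, (f k - a k) ^ 2)
      + (2 * ε * (f p - a p) + ε ^ 2) + (-(2 * ε * (f q - a q)) + ε ^ 2) := by
    rw [Finset.sum_congr rfl (fun k _ => hkey k)]
    rw [Finset.sum_add_distrib, Finset.sum_add_distrib]
    simp
  have := hopt g hgfeas
  rw [hsum] at this
  nlinarith [hεpos, hεD, hDpos]

lemma exists_dec {n : ℕ} {f f' : Fin n → ℝ} (hs : ∑ k, f k = ∑ k, f' k)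
    {i : Fin n} (hi : f i < f' i) : ∃ k, k ≠ i ∧ f' k < f k := by
  by_contra h
  push_neg at h
  have : ∑ k, f k < ∑ k, f' k := by
    apply Finset.sum_lt_sum (fun k _ => ?_) ⟨i, Finset.mem_univ i, hi⟩
    by_cases hk : k = i
    · subst hk; exact hi.le
    · exact h k hk
  linarith

lemma qp_master {n : ℕ} {b : ℝ}
    (P : (Fin n → ℝ) → (Fin n → ℝ) → (Fin n → ℝ) → (Fin n → ℝ))
    (hP : ∀ l u fhat, QPDataFeasible b l u →
      QPFeasible b l u (P l u fhat) ∧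
        ∀ g, QPFeasible b l u g →
          (1 / 2) * ∑ k, (P l u fhat k - fhat k) ^ 2 ≤ (1 / 2) * ∑ k, (g k - fhat k) ^ 2)
    {l u a l' u' a' : Fin n → ℝ} (hd : QPDataFeasible b l u) (hd' : QPDataFeasible b l' u')
    (i : Fin n)
    (hli : l i ≤ l' i) (hui : u i ≤ u' i) (hai : a i ≤ a' i)
    (hlk : ∀ k, k ≠ i → l' k ≤ l k) (huk : ∀ k, k ≠ i → u' k ≤ u k)
    (hak : ∀ k, k ≠ i → a' k ≤ a k) :
    P l u a i ≤ P l' u' a' i := by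
  obtain ⟨hfeas, hopt⟩ := hP l u a hd
  obtain ⟨hfeas', hopt'⟩ := hP l' u' a' hd'
  set f := P l u a with hfdef
  set f' := P l' u' a' with hf'def
  by_contra hcon
  push_neg at hcon  -- hcon : f' i < f i
  have hsums : ∑ k, f' k = ∑ k, f k := by rw [hfeas.1, hfeas'.1]
  obtain ⟨k, hk, hkdec⟩ := exists_dec hsums hcon  -- hkdec : f k < f' k
  -- basic box facts
  have h1 : l i < f i := lt_of_le_of_lt (le_trans hli (hfeas'.2 i).1) hcon
  have h2 : f' i < u' i := lt_of_lt_of_le hcon (le_trans (hfeas.2 i).2 hui)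
  have h3 : l' k < f' k := lt_of_le_of_lt (le_trans (hlk k hk) (hfeas.2 k).1) hkdec
  have h4 : f k < u k := lt_of_lt_of_le hkdec (le_trans (hfeas'.2 k).2 (huk k hk))
  have e1 : a k - f k ≤ a i - f i := qp_exchange hfeas hopt hk h4 h1
  have e2 : a' i - f' i ≤ a' k - f' k :=
    qp_exchange hfeas' hopt' (Ne.symm hk) h2 h3
  have := hak k hk
  linarith

theorem cbfqp_interval_bound_propagation (n : ℕ) (b : ℝ)
    (P : (Fin n → ℝ) → (Fin n → ℝ) → (Fin n → ℝ) → (Fin n → ℝ))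
    (hP : ∀ l u fhat, QPDataFeasible b l u →
      QPFeasible b l u (P l u fhat) ∧
        ∀ g, QPFeasible b l u g →
          (1 / 2) * ∑ k, (P l u fhat k - fhat k) ^ 2 ≤ (1 / 2) * ∑ k, (g k - fhat k) ^ 2) :
    -- monotone non-decreasing in `fhat i`
    (∀ l u fhat fhat' (i : Fin n), QPDataFeasible b l u →
      (∀ j, j ≠ i → fhat' j = fhat j) → fhat i ≤ fhat' i →
      P l u fhat i ≤ P l u fhat' i) ∧
    -- monotone non-increasing in `fhat j` for `j ≠ i`
    (∀ l u fhat fhat' (i j : Fin n), j ≠ i → QPDataFeasible b l u →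
      (∀ j', j' ≠ j → fhat' j' = fhat j') → fhat j ≤ fhat' j →
      P l u fhat' i ≤ P l u fhat i) ∧
    -- monotone non-decreasing in `l i` and `u i`
    (∀ l l' u u' fhat (i : Fin n), QPDataFeasible b l u → QPDataFeasible b l' u' →
      (∀ j, j ≠ i → l' j = l j) → (∀ j, j ≠ i → u' j = u j) →
      l i ≤ l' i → u i ≤ u' i →
      P l u fhat i ≤ P l' u' fhat i) ∧
    -- monotone non-increasing in `l j` and `u j` for `j ≠ i`
    (∀ l l' u u' fhat (i j : Fin n), j ≠ i → QPDataFeasible b l u → QPDataFeasible b l' u' →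
      (∀ j', j' ≠ j → l' j' = l j') → (∀ j', j' ≠ j → u' j' = u j') →
      l j ≤ l' j → u j ≤ u' j →
      P l' u' fhat i ≤ P l u fhat i) ∧
    -- consequent interval bounds
    (∀ llo lhi ulo uhi flo fhi l u fhat (i : Fin n),
      QPDataFeasible b l u →
      QPDataFeasible b (mix i llo lhi) (mix i ulo uhi) →
      QPDataFeasible b (mix i lhi llo) (mix i uhi ulo) →
      (∀ j, llo j ≤ l j ∧ l j ≤ lhi j) →
      (∀ j, ulo j ≤ u j ∧ u j ≤ uhi j) →
      (∀ j, flo j ≤ fhat j ∧ fhat j ≤ fhi j) →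
      P (mix i llo lhi) (mix i ulo uhi) (mix i flo fhi) i ≤ P l u fhat i ∧
      P l u fhat i ≤ P (mix i lhi llo) (mix i uhi ulo) (mix i fhi flo) i) := by
  refine ⟨?_, ?_, ?_, ?_, ?_⟩
  · intro l u fhat fhat' i hd hoff hii
    exact qp_master P hP hd hd i le_rfl le_rfl hii
      (fun k _ => le_rfl) (fun k _ => le_rfl) (fun k hk => (hoff k hk).le)
  · intro l u fhat fhat' i j hji hd hoff hjj
    refine qp_master P hP hd hd i le_rfl le_rfl ?_
      (fun k _ => le_rfl) (fun k _ => le_rfl) ?_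
    · exact (hoff i (Ne.symm hji)).le
    · intro k hk
      by_cases hkj : k = j
      · subst hkj; exact hjj
      · exact (hoff k hkj).ge
  · intro l l' u u' fhat i hd hd' hloff huoff hli hui
    exact qp_master P hP hd hd' i hli hui le_rfl
      (fun k hk => (hloff k hk).le) (fun k hk => (huoff k hk).le) (fun k _ => le_rfl)
  · intro l l' u u' fhat i j hji hd hd' hloff huoff hlj huj
    refine qp_master P hP hd' hd i (hloff i (Ne.symm hji)).le (huoff i (Ne.symm hji)).le le_rfl
      ?_ ?_ (fun k _ => le_rfl)
    · intro k hk
      by_cases hkj : k = j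
      · subst hkj; exact hlj
      · exact (hloff k hkj).ge
    · intro k hk
      by_cases hkj : k = j
      · subst hkj; exact huj
      · exact (huoff k hkj).ge
  · intro llo lhi ulo uhi flo fhi l u fhat i hd hdlo hdhi hl hu hf
    constructor
    · refine qp_master P hP hdlo hd i ?_ ?_ ?_ ?_ ?_ ?_
      · simp only [mix, if_pos rfl]; exact (hl i).1
      · simp only [mix, if_pos rfl]; exact (hu i).1
      · simp only [mix, if_pos rfl]; exact (hf i).1
      · intro k hk; simp only [mix, if_neg hk]; exact (hl k).2
      · intro k hk; simp only [mix, if_neg hk]; exact (hu k).2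
      · intro k hk; simp only [mix, if_neg hk]; exact (hf k).2
    · refine qp_master P hP hd hdhi i ?_ ?_ ?_ ?_ ?_ ?_
      · simp only [mix, if_pos rfl]; exact (hl i).2
      · simp only [mix, if_pos rfl]; exact (hu i).2
      · simp only [mix, if_pos rfl]; exact (hf i).2
      · intro k hk; simp only [mix, if_neg hk]; exact (hl k).1
      · intro k hk; simp only [mix, if_neg hk]; exact (hu k).1
      · intro k hk; simp only [mix, if_neg hk]; exact (hf k).1
end

section
/- Let g : [0,∞) → ℝ be continuous, differentiable on (0,∞), with g(0) ≥ 0 and g'(t) ≥ 0 whenever g(t) = 0. If additionally g'(t) ≥ −α(g(t)) for a locally Lipschitz strictly increasing α with α(0) = 0, then g(t) ≥ 0 for all t ≥ 0. -/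
theorem scalar_nagumo_invariance (g g' : ℝ → ℝ) (α : ℝ → ℝ)
    (hgc : ContinuousOn g (Set.Ici 0))
    (hderiv : ∀ t, 0 < t → HasDerivAt g (g' t) t)
    (hg0 : 0 ≤ g 0)
    (hbdry : ∀ t, 0 < t → g t = 0 → 0 ≤ g' t)
    (hα : ∀ t, 0 < t → g' t ≥ -α (g t))
    (hαlip : LocallyLipschitz α) (hαmono : StrictMono α) (hα0 : α 0 = 0) :
    ∀ t, 0 ≤ t → 0 ≤ g t := by
  intro t₁ ht₁
  by_contra hneg
  push_neg at hneg
  have ht₁pos : 0 < t₁ := by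
    rcases lt_or_eq_of_le ht₁ with h | h
    · exact h
    · exfalso; rw [← h] at hneg; linarith
  set S : Set ℝ := Set.Icc 0 t₁ ∩ g ⁻¹' Set.Ici 0 with hS
  have hSne : S.Nonempty := ⟨0, ⟨le_refl _, le_of_lt ht₁pos⟩, hg0⟩
  have hSbdd : BddAbove S := ⟨t₁, fun x hx => hx.1.2⟩
  have hSclosed : IsClosed S := by
    have := hgc.mono (Set.Icc_subset_Ici_self (b := (0:ℝ)) (a := t₁))
    exact this.preimage_isClosed_of_isClosed isClosed_Icc isClosed_Ici
  set t₀ := sSup S with ht₀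
  have ht₀mem : t₀ ∈ S := hSclosed.csSup_mem hSne hSbdd
  have ht₀0 : 0 ≤ t₀ := ht₀mem.1.1
  have hgt₀ : 0 ≤ g t₀ := ht₀mem.2
  have ht₀lt : t₀ < t₁ := by
    rcases lt_or_eq_of_le ht₀mem.1.2 with h | h
    · exact h
    · exfalso; rw [h] at hgt₀; linarith
  have hnegon : ∀ t, t₀ < t → t ≤ t₁ → g t < 0 := by
    intro t ht ht'
    by_contra h
    push_neg at h
    have : t ∈ S := ⟨⟨le_trans ht₀0 (le_of_lt ht), ht'⟩, h⟩
    exact absurd (le_csSup hSbdd this) (not_le.mpr ht)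
  have hmono : StrictMonoOn g (Set.Icc t₀ t₁) := by
    apply strictMonoOn_of_hasDerivWithinAt_pos (convex_Icc _ _)
      (hgc.mono (fun x hx => le_trans ht₀0 hx.1))
    · intro x hx
      rw [interior_Icc] at hx
      exact ((hderiv x (lt_of_le_of_lt ht₀0 hx.1)).hasDerivWithinAt)
    · intro x hx
      rw [interior_Icc] at hx
      have hxpos : 0 < x := lt_of_le_of_lt ht₀0 hx.1
      have hgx : g x < 0 := hnegon x hx.1 hx.2.le
      have : α (g x) < 0 := by
        have := hαmono hgx
        rwa [hα0] at this
      linarith [hα x hxpos]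
  have := hmono (Set.left_mem_Icc.mpr ht₀lt.le) (Set.right_mem_Icc.mpr ht₀lt.le) ht₀lt
  linarith
end
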